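/- For any complex parameters δ, ε, σ, τ and n ≥ 3, let A_n be the n×n matrix with A[1,1] = 2-δ, A[n,n] = 2-τ, A[1,n] = -ε, A[n,1] = -σ, A[k,k] = 2 for 2 ≤ k ≤ n-1, A[k,k+1] = A[k+1,k] = -1 for 1 ≤ k ≤ n-1, and zeros elsewhere. Then det(λI - A_n) = U_n((λ-2)/2) + (δ+τ)·U_{n-1}((λ-2)/2) + (δτ - εσ)·U_{n-2}((λ-2)/2) + (-1)^{n+1}(ε+σ), where U_k is the k-th Chebyshev polynomial of the second kind. -/

import Mathlib

open Matrix Polynomial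

open Finset
-- val of succAbove
lemma coe_succAbove {k : ℕ} (p : Fin (k+1)) (i : Fin k) :
    ((p.succAbove i : Fin (k+1)) : ℕ) = if (i:ℕ) < (p:ℕ) then (i:ℕ) else (i:ℕ)+1 := by
  rw [Fin.succAbove]
  split_ifs with h1 h2 h2
  · rfl
  · exact absurd (by simpa [Fin.lt_def] using h1) h2
  · exact absurd (by simpa [Fin.lt_def] using h2) h1
  · rfl

def tri (k : ℕ) (x c : ℂ) : Matrix (Fin k) (Fin k) ℂ :=
  fun i j =>
    if (i:ℕ) = j then (if (i:ℕ) = k - 1 then c else 2*x)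
    else if (i:ℕ)+1 = j ∨ (j:ℕ)+1 = i then 1 else 0

lemma sum_eq_two {k : ℕ} (f : Fin (k+2) → ℂ) (h : ∀ j : Fin (k+2), 2 ≤ (j:ℕ) → f j = 0) :
    ∑ j, f j = f 0 + f 1 := by
  rw [Fin.sum_univ_succ, Fin.sum_univ_succ]
  have : ∀ j : Fin k, f j.succ.succ = 0 := fun j => h _ (by simp [Fin.val_succ])
  simp [this, Fin.succ_zero_eq_one]

lemma sum_eq_first {k : ℕ} (f : Fin (k+1) → ℂ) (h : ∀ j : Fin (k+1), (j:ℕ) ≠ 0 → f j = 0) :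
    ∑ j, f j = f 0 := by
  rw [Fin.sum_univ_succ]
  have : ∀ j : Fin k, f j.succ = 0 := fun j => h _ (by simp)
  simp [this]

lemma sum_eq_first_last {k : ℕ} (f : Fin (k+2) → ℂ)
    (h : ∀ j : Fin (k+2), (j:ℕ) ≠ 0 → (j:ℕ) ≠ k+1 → f j = 0) :
    ∑ j, f j = f 0 + f ⟨k+1, by omega⟩ := by
  rw [Fin.sum_univ_succ]
  have h2 : ∑ j : Fin (k+1), f j.succ = f ⟨k+1, by omega⟩ := by
    rw [show (⟨k+1, by omega⟩ : Fin (k+2)) = (⟨k, by omega⟩ : Fin (k+1)).succ by rfl]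
    refine Finset.sum_eq_single_of_mem _ (mem_univ _) fun j _ hj => ?_
    refine h _ (by simp) ?_
    simp only [Fin.val_succ, ne_eq]
    intro hc
    apply hj
    have hjv : (j:ℕ) = k := by omega
    exact Fin.ext hjv
  rw [h2]

lemma sum_eq_three {m : ℕ} (f : Fin (m+3) → ℂ)
    (h : ∀ j : Fin (m+3), (j:ℕ) ≠ 0 → (j:ℕ) ≠ 1 → (j:ℕ) ≠ m+2 → f j = 0) :
    ∑ j, f j = f 0 + f 1 + f ⟨m+2, by omega⟩ := by
  rw [Fin.sum_univ_succ]
  have : ∑ j : Fin (m+2), f j.succ = f 1 + f ⟨m+2, by omega⟩ := by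
    rw [sum_eq_first_last (fun j => f j.succ) (fun j hj hj2 => h _ (by simp) (by simpa using hj) (by simp only [Fin.val_succ]; omega))]
    rfl
  rw [this]; ring

lemma tri_submatrix (a l : ℕ) (x c : ℂ) (f g : Fin l → Fin (l+a))
    (hf : ∀ i, ((f i : ℕ)) = i + a) (hg : ∀ j, ((g j : ℕ)) = j + a) :
    (tri (l+a) x c).submatrix f g = tri l x c := by
  ext i j
  simp only [submatrix_apply, tri, hf, hg]
  split_ifs <;> first | rfl | omega | simp_all

lemma det_tri (x c : ℂ) : ∀ k, (tri (k+1) x c).det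
    = c * (Chebyshev.U ℂ (k:ℤ)).eval x - (Chebyshev.U ℂ ((k:ℤ)-1)).eval x := by
  intro k
  induction k using Nat.strong_induction_on with
  | _ k ih =>
  match k with
  | 0 => simp [Matrix.det_fin_one, tri, Polynomial.Chebyshev.U_zero, Polynomial.Chebyshev.U_neg_one]
  | 1 =>
      rw [Matrix.det_fin_two]
      simp [tri, Polynomial.Chebyshev.U_zero, Polynomial.Chebyshev.U_one]
      ring
  | (j+2) =>
      rw [show ((j+2:ℕ):ℤ) = (j:ℤ)+2 by push_cast; ring, show (j:ℤ)+2-1 = (j:ℤ)+1 by ring]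
      rw [show j+2+1 = (j+2).succ from rfl, Matrix.det_succ_column_zero]
      rw [sum_eq_two _ (fun i hi => by
        have h0 : tri (j + 2).succ x c i 0 = 0 := by
          simp only [tri]
          have h1 : ¬ ((i:ℕ) = ((0:Fin (j+3)):ℕ)) := by
            have h00 : ((0:Fin (j+3)):ℕ) = 0 := rfl
            omega
          have h2 : ¬ ((i:ℕ)+1 = ((0:Fin (j+3)):ℕ) ∨ ((0:Fin (j+3)):ℕ)+1 = (i:ℕ)) := by
            simp; omega
          rw [if_neg h1, if_neg h2]
        rw [h0]; ring)]
      have m0 : ((tri (j + 2).succ x c).submatrix (Fin.succAbove 0) Fin.succ).det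
          = c * (Chebyshev.U ℂ ((j:ℤ)+1)).eval x - (Chebyshev.U ℂ (j:ℤ)).eval x := by
        rw [Fin.succAbove_zero,
          show (tri (j + 2).succ x c).submatrix Fin.succ Fin.succ = tri (j+2) x c from
            tri_submatrix 1 (j+2) x c _ _ (fun i => by simp) (fun i => by simp)]
        have := ih (j+1) (by omega)
        rw [this]
        push_cast
        ring_nf
      have m1 : ((tri (j + 2).succ x c).submatrix (Fin.succAbove 1) Fin.succ).det
          = c * (Chebyshev.U ℂ (j:ℤ)).eval x - (Chebyshev.U ℂ ((j:ℤ)-1)).eval x := by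
        rw [Matrix.det_succ_row_zero]
        rw [sum_eq_first _ (fun i hi => by
          have h0 : (tri ((j+2)+1) x c).submatrix (Fin.succAbove 1) Fin.succ 0 i = 0 := by
            simp only [submatrix_apply, tri, coe_succAbove, Fin.val_succ, Fin.val_zero,
              Fin.val_one]
            split_ifs <;> first | rfl | omega | simp_all
          rw [h0]; ring)]
        have hv0 : (tri ((j+2)+1) x c).submatrix (Fin.succAbove 1) Fin.succ 0 0 = 1 := by
          simp only [submatrix_apply, tri]
          have hv : (((1:Fin (j+3)).succAbove 0 : Fin _) : ℕ) = 0 := by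
            rw [coe_succAbove]; simp
          rw [hv]
          have hs : (((0:Fin (j+2)).succ : Fin _) : ℕ) = 1 := by simp
          rw [hs]
          norm_num
        rw [hv0, Matrix.submatrix_submatrix, Fin.succAbove_zero]
        have hsub : (tri ((j+1)+2) x c).submatrix ((Fin.succAbove 1) ∘ Fin.succ)
            (Fin.succ ∘ Fin.succ) = tri (j+1) x c := by
          exact tri_submatrix 2 (j+1) x c _ _
            (fun i => by
              simp only [Function.comp_apply, coe_succAbove, Fin.val_succ]
              have : ¬ ((i:ℕ)+1 < ((1 : Fin (j+1+2)):ℕ)) := by simp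
              rw [if_neg this])
            (fun i => by simp [Fin.val_succ])
        rw [hsub, ih j (by omega)]
        norm_num
      rw [m0, m1]
      have ht00 : tri (j + 2).succ x c 0 0 = 2*x := by
        simp only [tri]
        rw [if_pos (by simp), if_neg (by simp)]
      have ht10 : tri (j + 2).succ x c 1 0 = 1 := by
        simp only [tri]
        have h1 : ¬(((1:Fin (j+3)):ℕ) = ((0:Fin (j+3)):ℕ)) := by simp
        rw [if_neg h1, if_pos (by simp)]
      rw [ht00, ht10]
      have r1 := Polynomial.Chebyshev.U_add_two ℂ (j:ℤ)
      have e1 : (Chebyshev.U ℂ ((j:ℤ)+2)).eval x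
          = 2*x*(Chebyshev.U ℂ ((j:ℤ)+1)).eval x - (Chebyshev.U ℂ (j:ℤ)).eval x := by
        rw [r1]; simp
      have r2 := Polynomial.Chebyshev.U_add_two ℂ ((j:ℤ)-1)
      rw [show (j:ℤ)-1+2 = (j:ℤ)+1 by ring, show (j:ℤ)-1+1 = (j:ℤ) by ring] at r2
      have e2 : (Chebyshev.U ℂ ((j:ℤ)+1)).eval x
          = 2*x*(Chebyshev.U ℂ (j:ℤ)).eval x - (Chebyshev.U ℂ ((j:ℤ)-1)).eval x := by
        rw [r2]; simp
      rw [e1, e2]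
      simp only [Fin.val_zero, Fin.val_one, pow_zero, pow_one]
      ring

def pert (n : ℕ) (x δ ε σ τ : ℂ) : Matrix (Fin n) (Fin n) ℂ :=
  fun i j =>
    if (i:ℕ) = j then (if (i:ℕ) = 0 then 2*x + δ else if (i:ℕ) = n-1 then 2*x + τ else 2*x)
    else if (i:ℕ)+1 = j ∨ (j:ℕ)+1 = i then 1
    else if (i:ℕ) = 0 ∧ (j:ℕ) = n-1 then ε
    else if (i:ℕ) = n-1 ∧ (j:ℕ) = 0 then σ
    else 0

set_option maxHeartbeats 2000000 in
lemma det_pert (m : ℕ) (x δ ε σ τ : ℂ) :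
    (pert (m+3) x δ ε σ τ).det =
      (Chebyshev.U ℂ ((m:ℤ)+3)).eval x + (δ+τ) * (Chebyshev.U ℂ ((m:ℤ)+2)).eval x
      + (δ*τ - ε*σ) * (Chebyshev.U ℂ ((m:ℤ)+1)).eval x + (-1:ℂ)^(m+4) * (ε+σ) := by
  set a := (Chebyshev.U ℂ ((m:ℤ)+1)).eval x with ha
  set b := (Chebyshev.U ℂ (m:ℤ)).eval x with hb
  set cc := (Chebyshev.U ℂ ((m:ℤ)-1)).eval x with hcc
  have dt1 : (tri (m+2) x (2*x+τ)).det = (2*x+τ) * a - b := by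
    have h := det_tri x (2*x+τ) (m+1)
    push_cast at h
    rw [show (m:ℤ)+1-1 = (m:ℤ) by ring] at h
    exact h
  have dt2 : (tri (m+1) x (2*x+τ)).det = (2*x+τ) * b - cc := det_tri x (2*x+τ) m
  have dt3 : (tri (m+1) x (2*x)).det = (2*x) * b - cc := det_tri x (2*x) m
  -- expansion along row 0
  rw [show m+3 = (m+2).succ from rfl, Matrix.det_succ_row_zero]
  rw [sum_eq_three _ (fun j hj0 hj1 hjl => by
    have h0 : pert (m+2).succ x δ ε σ τ 0 j = 0 := by
      simp only [pert, Fin.val_zero]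
      split_ifs <;> first | rfl | omega | simp_all
    rw [h0]; ring)]
  -- entries of row 0
  have e00 : pert (m+2).succ x δ ε σ τ 0 0 = 2*x + δ := by
    simp only [pert, Fin.val_zero]; norm_num
  have e01 : pert (m+2).succ x δ ε σ τ 0 1 = 1 := by
    simp only [pert, Fin.val_zero, Fin.val_one]
    split_ifs <;> first | rfl | omega | simp_all
  have e0l : pert (m+2).succ x δ ε σ τ 0 ⟨m+2, by omega⟩ = ε := by
    simp only [pert, Fin.val_zero, Fin.val_mk]
    split_ifs <;> first | rfl | omega | simp_all
  rw [e00, e01, e0l]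
  -- minor 0
  have hm0 : (pert (m+2).succ x δ ε σ τ).submatrix Fin.succ ((0:Fin (m+2).succ).succAbove)
      = tri (m+2) x (2*x+τ) := by
    ext i j
    simp only [submatrix_apply, pert, tri, coe_succAbove, Fin.val_succ,
      Fin.val_zero, Fin.val_one, Fin.val_mk]
    split_ifs <;> first | rfl | omega | simp_all
  -- minor 1 : expand along column 0
  have hm1 : ((pert (m+2).succ x δ ε σ τ).submatrix Fin.succ ((1:Fin (m+2).succ).succAbove)).det
      = ((2*x+τ) * b - cc) + (-1:ℂ)^(m+1) * σ := by
    rw [Matrix.det_succ_column_zero]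
    rw [sum_eq_first_last _ (fun i hi0 hil => by
      have h0 : (pert (m+2).succ x δ ε σ τ).submatrix Fin.succ
          ((1:Fin (m+2).succ).succAbove) i 0 = 0 := by
        simp only [submatrix_apply, pert, coe_succAbove, Fin.val_succ,
          Fin.val_zero, Fin.val_one, Fin.val_mk]
        split_ifs <;> first | rfl | omega | simp_all
      rw [h0]; ring)]
    have v0 : (pert (m+2).succ x δ ε σ τ).submatrix Fin.succ
        ((1:Fin (m+2).succ).succAbove) 0 0 = 1 := by
      simp only [submatrix_apply, pert, coe_succAbove, Fin.val_succ,
        Fin.val_zero, Fin.val_one, Fin.val_mk]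
      split_ifs <;> first | rfl | omega | simp_all
    have vl : (pert (m+2).succ x δ ε σ τ).submatrix Fin.succ
        ((1:Fin (m+2).succ).succAbove) ⟨m+1, by omega⟩ 0 = σ := by
      simp only [submatrix_apply, pert, coe_succAbove, Fin.val_succ,
        Fin.val_zero, Fin.val_one, Fin.val_mk]
      split_ifs <;> first | rfl | omega | simp_all
    have sub0 : (((pert (m+2).succ x δ ε σ τ).submatrix Fin.succ
        ((1:Fin (m+2).succ).succAbove)).submatrix ((0:Fin (m+1).succ).succAbove) Fin.succ)
        = tri (m+1) x (2*x+τ) := by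
      rw [Matrix.submatrix_submatrix]
      ext i j
      simp only [submatrix_apply, Function.comp_apply, pert, tri, coe_succAbove, Fin.val_succ,
        Fin.val_zero, Fin.val_one, Fin.val_mk]
      split_ifs <;> first | rfl | omega | simp_all
    have subl : ((((pert (m+2).succ x δ ε σ τ).submatrix Fin.succ
        ((1:Fin (m+2).succ).succAbove)).submatrix
          ((⟨m+1, by omega⟩:Fin (m+1).succ).succAbove) Fin.succ)).det = 1 := by
      rw [Matrix.submatrix_submatrix]
      have htr := Matrix.det_of_lowerTriangular
        (((pert (m+2).succ x δ ε σ τ)).submatrix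
          (Fin.succ ∘ ((⟨m+1, by omega⟩:Fin (m+1).succ).succAbove))
          (((1:Fin (m+2).succ).succAbove) ∘ Fin.succ))
        (fun i j hij => by
          have hij' : (i:ℕ) < (j:ℕ) := hij
          have hi := i.isLt
          have e1 : ((((⟨m+1, by omega⟩:Fin (m+1).succ).succAbove i) : Fin (m+2)) : ℕ) = i := by
            rw [coe_succAbove, if_pos (by simp only [Fin.val_mk]; omega)]
          have e2 : ((((1:Fin (m+2).succ).succAbove j.succ) : Fin (m+3)) : ℕ) = j + 2 := by
            rw [coe_succAbove, if_neg (by simp only [Fin.val_succ, Fin.val_one]; omega), Fin.val_succ]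
          simp only [submatrix_apply, Function.comp_apply, pert, e1, e2, Fin.val_succ,
            Fin.val_zero, Fin.val_one, Fin.val_mk]
          split_ifs <;> first | rfl | omega | simp_all)
      rw [htr]
      refine Finset.prod_eq_one fun i _ => ?_
      simp only [submatrix_apply, Function.comp_apply, pert, coe_succAbove, Fin.val_succ,
        Fin.val_zero, Fin.val_one, Fin.val_mk]
      split_ifs <;> first | rfl | omega | simp_all
    rw [v0, vl, sub0, subl, dt2]
    simp only [Fin.val_zero, Fin.val_mk]
    ring
  -- minor 2 : expand along column 0
  have hm2 : ((pert (m+2).succ x δ ε σ τ).submatrix Fin.succ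
      ((⟨m+2, by omega⟩:Fin (m+2).succ).succAbove)).det
      = 1 + (-1:ℂ)^(m+1) * σ * ((2*x) * b - cc) := by
    rw [Matrix.det_succ_column_zero]
    rw [sum_eq_first_last _ (fun i hi0 hil => by
      have h0 : (pert (m+2).succ x δ ε σ τ).submatrix Fin.succ
          ((⟨m+2, by omega⟩:Fin (m+2).succ).succAbove) i 0 = 0 := by
        simp only [submatrix_apply, pert, coe_succAbove, Fin.val_succ,
          Fin.val_zero, Fin.val_one, Fin.val_mk]
        split_ifs <;> first | rfl | omega | simp_all
      rw [h0]; ring)]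
    have v0 : (pert (m+2).succ x δ ε σ τ).submatrix Fin.succ
        ((⟨m+2, by omega⟩:Fin (m+2).succ).succAbove) 0 0 = 1 := by
      simp only [submatrix_apply, pert, coe_succAbove, Fin.val_succ,
        Fin.val_zero, Fin.val_one, Fin.val_mk]
      split_ifs <;> first | rfl | omega | simp_all
    have vl : (pert (m+2).succ x δ ε σ τ).submatrix Fin.succ
        ((⟨m+2, by omega⟩:Fin (m+2).succ).succAbove) ⟨m+1, by omega⟩ 0 = σ := by
      simp only [submatrix_apply, pert, coe_succAbove, Fin.val_succ,
        Fin.val_zero, Fin.val_one, Fin.val_mk]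
      split_ifs <;> first | rfl | omega | simp_all
    have sub0 : ((((pert (m+2).succ x δ ε σ τ).submatrix Fin.succ
        ((⟨m+2, by omega⟩:Fin (m+2).succ).succAbove)).submatrix
          ((0:Fin (m+1).succ).succAbove) Fin.succ)).det = 1 := by
      rw [Matrix.submatrix_submatrix]
      have htr := Matrix.det_of_upperTriangular
        (M := ((pert (m+2).succ x δ ε σ τ)).submatrix
          (Fin.succ ∘ ((0:Fin (m+1).succ).succAbove))
          (((⟨m+2, by omega⟩:Fin (m+2).succ).succAbove) ∘ Fin.succ))
        (fun i j hij => by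
          have hij' : (j:ℕ) < (i:ℕ) := hij
          have hj := j.isLt
          have e1 : ((((0:Fin (m+1).succ).succAbove i) : Fin (m+2)) : ℕ) = i + 1 := by
            rw [Fin.succAbove_zero, Fin.val_succ]
          have e2 : ((((⟨m+2, by omega⟩:Fin (m+2).succ).succAbove j.succ) : Fin (m+3)) : ℕ)
              = j + 1 := by
            rw [coe_succAbove, if_pos (by simp only [Fin.val_succ, Fin.val_mk]; omega), Fin.val_succ]
          simp only [submatrix_apply, Function.comp_apply, pert, e1, e2, Fin.val_succ,
            Fin.val_zero, Fin.val_one, Fin.val_mk]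
          split_ifs <;> first | rfl | omega | simp_all)
      rw [htr]
      refine Finset.prod_eq_one fun i _ => ?_
      have hi := i.isLt
      have e3 : ((((⟨m+2, by omega⟩:Fin (m+2).succ).succAbove i.succ) : Fin (m+3)) : ℕ)
          = i + 1 := by
        rw [coe_succAbove, if_pos (by simp only [Fin.val_succ, Fin.val_mk]; omega), Fin.val_succ]
      simp only [submatrix_apply, Function.comp_apply, pert, e3, Fin.val_succ,
        Fin.val_zero, Fin.val_one, Fin.val_mk]
      split_ifs <;> first | rfl | omega | simp_all
    have subl : (((pert (m+2).succ x δ ε σ τ).submatrix Fin.succ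
        ((⟨m+2, by omega⟩:Fin (m+2).succ).succAbove)).submatrix
          ((⟨m+1, by omega⟩:Fin (m+1).succ).succAbove) Fin.succ)
        = tri (m+1) x (2*x) := by
      rw [Matrix.submatrix_submatrix]
      ext i j
      simp only [submatrix_apply, Function.comp_apply, pert, tri, coe_succAbove, Fin.val_succ,
        Fin.val_zero, Fin.val_one, Fin.val_mk]
      split_ifs <;> first | rfl | omega | simp_all
    rw [v0, vl, sub0, subl, dt3]
    simp only [Fin.val_zero, Fin.val_mk]
    ring
  rw [hm0, hm1, hm2, dt1]
  -- Chebyshev recurrences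
  have r1 := Polynomial.Chebyshev.U_add_two ℂ ((m:ℤ)+1)
  rw [show (m:ℤ)+1+2 = (m:ℤ)+3 by ring, show (m:ℤ)+1+1 = (m:ℤ)+2 by ring] at r1
  have e1 : (Chebyshev.U ℂ ((m:ℤ)+3)).eval x
      = 2*x*(Chebyshev.U ℂ ((m:ℤ)+2)).eval x - a := by rw [r1, ha]; simp
  have r2 := Polynomial.Chebyshev.U_add_two ℂ (m:ℤ)
  rw [show (m:ℤ)+2 = (m:ℤ)+2 by ring] at r2
  have e2 : (Chebyshev.U ℂ ((m:ℤ)+2)).eval x = 2*x*a - b := by rw [r2, ha, hb]; simp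
  have r3 := Polynomial.Chebyshev.U_add_two ℂ ((m:ℤ)-1)
  rw [show (m:ℤ)-1+2 = (m:ℤ)+1 by ring, show (m:ℤ)-1+1 = (m:ℤ) by ring] at r3
  have e3 : a = 2*x*b - cc := by rw [ha, hb, hcc, r3]; simp
  have hP : (-1:ℂ)^m * (-1:ℂ)^m = 1 := by
    rw [← pow_add, ← two_mul, pow_mul]
    norm_num
  rw [e1, e2]
  simp only [Fin.val_zero, Fin.val_one, Fin.val_mk, pow_zero, pow_one]
  have hp1 : (-1:ℂ)^(m+1) = -(-1:ℂ)^m := by rw [pow_succ]; ring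
  have hp2 : (-1:ℂ)^(m+2) = (-1:ℂ)^m := by rw [pow_succ, pow_succ]; ring
  have hp4 : (-1:ℂ)^(m+4) = (-1:ℂ)^m := by
    rw [show m+4 = m+2+2 from rfl, pow_succ, pow_succ, hp2]; ring
  rw [hp1, hp2, hp4]
  linear_combination (1+ε*σ) * e3 - ε*σ*(2*x*b - cc) * hP

set_option maxHeartbeats 1000000 in
/-- Characteristic polynomial of the tridiagonal Toeplitz matrix with diagonals `-1, 2, -1`
and corner perturbations `δ, ε, σ, τ`:
`det(λI - Aₙ) = U_n((λ-2)/2) + (δ+τ)U_{n-1}((λ-2)/2) + (δτ-εσ)U_{n-2}((λ-2)/2)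
+ (-1)^{n+1}(ε+σ)`. -/
theorem charpoly_tridiag_corner_perturbations (n : ℕ) (hn : 3 ≤ n)
    (δ ε σ τ : ℂ)
    (A : Matrix (Fin n) (Fin n) ℂ)
    (hA : ∀ i j : Fin n, A i j =
      if i = j then
        (if (i : ℕ) = 0 then 2 - δ
         else if (i : ℕ) = n - 1 then 2 - τ else 2)
      else if (i : ℕ) + 1 = (j : ℕ) ∨ (j : ℕ) + 1 = (i : ℕ) then -1
      else if (i : ℕ) = 0 ∧ (j : ℕ) = n - 1 then -ε
      else if (i : ℕ) = n - 1 ∧ (j : ℕ) = 0 then -σ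
      else 0) :
    ∀ lam : ℂ,
      (lam • (1 : Matrix (Fin n) (Fin n) ℂ) - A).det
        = (Chebyshev.U ℂ (n : ℤ)).eval ((lam - 2) / 2)
          + (δ + τ) * (Chebyshev.U ℂ ((n : ℤ) - 1)).eval ((lam - 2) / 2)
          + (δ * τ - ε * σ) * (Chebyshev.U ℂ ((n : ℤ) - 2)).eval ((lam - 2) / 2)
          + (-1) ^ (n + 1) * (ε + σ) := by
  intro lam
  obtain ⟨m, rfl⟩ : ∃ m, n = m + 3 := ⟨n - 3, by omega⟩
  have hM : lam • (1 : Matrix (Fin (m+3)) (Fin (m+3)) ℂ) - A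
      = pert (m+3) ((lam-2)/2) δ ε σ τ := by
    ext i j
    rw [Matrix.sub_apply, Matrix.smul_apply, Matrix.one_apply, hA i j]
    simp only [pert, smul_eq_mul, Fin.ext_iff]
    split_ifs <;> first | ring | omega | simp_all
  rw [hM, det_pert m ((lam-2)/2) δ ε σ τ]
  rw [show ((m+3:ℕ):ℤ) = (m:ℤ)+3 by push_cast; ring,
    show (m:ℤ)+3-1 = (m:ℤ)+2 by ring, show (m:ℤ)+3-2 = (m:ℤ)+1 by ring,
    show m+3+1 = m+4 by omega]
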